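/- In the setting of the quiver presentation theorem for Gr(X), the ideal ⟨R'⟩ of kQ' generated by R' = R'_1 ∪ R'_2 ∪ R'_3 does not depend on the choices of lifts aα ∈ kQ^{(j)} of X(ā)(Φ^{(i)}(α)) used in defining R'_3. -/

import Mathlib

open CategoryTheory Quiver Finsupp
open scoped Classical

noncomputable section

def pcomp {W : Type} [Quiver.{0} W] {k : Type} [Field k] {x y z : W}
    (f : Quiver.Path x y →₀ k) (g : Quiver.Path y z →₀ k) : Quiver.Path x z →₀ k :=
  f.sum fun p fp => g.sum fun q gq => Finsupp.single (p.comp q) (gq * fp)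

def pathsRel {V : Type} [Quiver.{0} V]
    (R : ∀ ⦃i j : V⦄, Quiver.Path i j → Quiver.Path i j → Prop) : HomRel (Paths V) :=
  fun {_ _} p q => R p q

def PresCat {V : Type} [Quiver.{0} V]
    (R : ∀ ⦃i j : V⦄, Quiver.Path i j → Quiver.Path i j → Prop) : Type :=
  CategoryTheory.Quotient (pathsRel R)

noncomputable instance {V : Type} [Quiver.{0} V]
    (R : ∀ ⦃i j : V⦄, Quiver.Path i j → Quiver.Path i j → Prop) : Category (PresCat R) :=
  inferInstanceAs (Category (CategoryTheory.Quotient (pathsRel R)))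

def presObj {V : Type} [Quiver.{0} V]
    (R : ∀ ⦃i j : V⦄, Quiver.Path i j → Quiver.Path i j → Prop) (i : V) : PresCat R := ⟨i⟩

variable {k : Type} [Field k] {V : Type} [Quiver.{0} V]
variable {W : V → Type} [∀ i, Quiver.{0} (W i)]

def RIdeal (Ri : ∀ (i : V) ⦃x y : W i⦄, (Quiver.Path x y →₀ k) → Prop)
    (i : V) (x y : W i) : Submodule k (Quiver.Path x y →₀ k) :=
  Submodule.span k
    {f | ∃ (x' y' : W i) (α : Quiver.Path x x') (r : Quiver.Path x' y' →₀ k)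
      (β : Quiver.Path y' y),
      Ri i r ∧ f = pcomp (Finsupp.single α 1) (pcomp r (Finsupp.single β 1))}

abbrev XH (Ri : ∀ (i : V) ⦃x y : W i⦄, (Quiver.Path x y →₀ k) → Prop)
    (i : V) (x y : W i) : Type :=
  (Quiver.Path x y →₀ k) ⧸ RIdeal Ri i x y

variable (Ri : ∀ (i : V) ⦃x y : W i⦄, (Quiver.Path x y →₀ k) → Prop)

def qcomp {i : V} {x y z : W i} (f : XH Ri i x y) (g : XH Ri i y z) :
    XH Ri i x z :=
  Submodule.Quotient.mk (pcomp (Quotient.out f) (Quotient.out g))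

variable (fobj : ∀ ⦃i j : V⦄, (i ⟶ j) → W i → W j)

def pobj {i j : V} (p : Quiver.Path i j) (x : W i) : W j :=
  Quiver.Path.rec (motive := fun b _ => W b) x (fun _ e ih => fobj e ih) p

variable (fhomQ : ∀ ⦃i j : V⦄ (a : i ⟶ j) ⦃x y : W i⦄,
  XH Ri i x y →ₗ[k] XH Ri j (fobj a x) (fobj a y))

def phomQ {i j : V} (p : Quiver.Path i j) {x y : W i} :
    XH Ri i x y →ₗ[k] XH Ri j (pobj fobj p x) (pobj fobj p y) :=
  Quiver.Path.rec
    (motive := fun b q =>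
      XH Ri i x y →ₗ[k] XH Ri b (pobj fobj q x) (pobj fobj q y))
    LinearMap.id (fun _ e ih => (fhomQ e).comp ih) p

/-- The new arrows of the quiver `Q'`. -/
inductive QArr : (Σ i : V, W i) → (Σ i : V, W i) → Type where
  | inner : ∀ {i : V} {x y : W i}, (x ⟶ y) → QArr ⟨i, x⟩ ⟨i, y⟩
  | trans : ∀ {i j : V} (a : i ⟶ j) (x : W i), QArr ⟨i, x⟩ ⟨j, fobj a x⟩

/-- Paths of the quiver `Q'`. -/
inductive QPath : (Σ i : V, W i) → (Σ i : V, W i) → Type where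
  | nil : ∀ u, QPath u u
  | cons : ∀ {u v w}, QPath u v → QArr fobj v w → QPath u w

/-- Concatenation of paths of `Q'`. -/
def qpComp {u v w : Σ i : V, W i} (p : QPath fobj u v) (q : QPath fobj v w) :
    QPath fobj u w :=
  QPath.rec (motive := fun w' _ => QPath fobj u w')
    p (fun _ a ih => QPath.cons ih a) q

/-- Convolution composition in `kQ'`. -/
def kpcomp {u v w : Σ i : V, W i}
    (f : QPath fobj u v →₀ k) (g : QPath fobj v w →₀ k) :
    QPath fobj u w →₀ k :=
  f.sum fun p fp => g.sum fun q gq => Finsupp.single (qpComp fobj p q) (gq * fp)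

/-- The embedding of paths of `Q⁽ⁱ⁾` as paths of inner arrows in `Q'`. -/
def innerPath {i : V} {x y : W i} (p : Quiver.Path x y) :
    QPath fobj ⟨i, x⟩ ⟨i, y⟩ :=
  Quiver.Path.rec (motive := fun b _ => QPath fobj ⟨i, x⟩ ⟨i, b⟩)
    (QPath.nil _) (fun _ e ih => QPath.cons ih (QArr.inner e)) p

/-- The embedding `σ⁽ⁱ⁾ : kQ⁽ⁱ⁾ → kQ'`. -/
def sigmaMap {i : V} {x y : W i} (f : Quiver.Path x y →₀ k) :
    QPath fobj ⟨i, x⟩ ⟨i, y⟩ →₀ k :=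
  Finsupp.mapDomain (innerPath fobj) f

/-- The path `π(a, ᵢx)` of transport arrows in `Q'` lifting a path `a` of `Q`. -/
def piPath {i j : V} (p : Quiver.Path i j) (x : W i) :
    QPath fobj ⟨i, x⟩ ⟨j, pobj fobj p x⟩ :=
  Quiver.Path.rec (motive := fun b q => QPath fobj ⟨i, x⟩ ⟨b, pobj fobj q x⟩)
    (QPath.nil _) (fun q e ih => QPath.cons ih (QArr.trans e (pobj fobj q x))) p

/-- Transport of a path of `Q'` along an equality of its target vertex. -/
def castQP {u : Σ i : V, W i} {j : V} {y y' : W j} (e : y = y')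
    (p : QPath fobj u ⟨j, y⟩) : QPath fobj u ⟨j, y'⟩ := by
  cases e; exact p

/-- Transport of a hom-class along equalities of objects. -/
def castXH {j : V} {u u' y y' : W j} (e : u = u') (e' : y = y')
    (f : XH Ri j u y) : XH Ri j u' y' := by
  cases e; cases e'; exact f

variable (R : ∀ ⦃i j : V⦄, Quiver.Path i j → Quiver.Path i j → Prop)
variable (lift : ∀ ⦃i j : V⦄ (a : i ⟶ j) ⦃x y : W i⦄ (α : x ⟶ y),
  Quiver.Path (fobj a x) (fobj a y) →₀ k)

/-- The relations `R' = R'₁ ∪ R'₂ ∪ R'₃` on `kQ'`. -/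
inductive RelR' : ∀ ⦃u v : Σ i : V, W i⦄, (QPath fobj u v →₀ k) → Prop where
  | r1 : ∀ {i : V} {x y : W i} (r : Quiver.Path x y →₀ k), Ri i r →
      RelR' (sigmaMap fobj r)
  | r2 : ∀ {i j : V} (g h : Quiver.Path i j), R g h → ∀ (x : W i)
      (e : pobj fobj h x = pobj fobj g x),
      RelR' (Finsupp.single (piPath fobj g x) 1
        - Finsupp.single (castQP fobj e (piPath fobj h x)) 1)
  | r3 : ∀ {i j : V} (a : i ⟶ j) {x y : W i} (α : x ⟶ y),
      RelR' (Finsupp.single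
          (QPath.cons (QPath.cons (QPath.nil ⟨i, x⟩) (QArr.inner α)) (QArr.trans a y)) 1
        - kpcomp fobj (Finsupp.single (QPath.cons (QPath.nil ⟨i, x⟩) (QArr.trans a x)) 1)
            (sigmaMap fobj (lift a α)))

/-- The ideal `⟨R'⟩` of `kQ'`. -/
def IdR' (u v : Σ i : V, W i) : Submodule k (QPath fobj u v →₀ k) :=
  Submodule.span k
    {f | ∃ (u' v' : Σ i : V, W i) (α : QPath fobj u u')
      (g : QPath fobj u' v' →₀ k) (β : QPath fobj v' v),
      RelR' Ri fobj R lift g ∧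
        f = kpcomp fobj (Finsupp.single α 1) (kpcomp fobj g (Finsupp.single β 1))}

end

noncomputable section
variable {k : Type} [Field k] {V : Type} [Quiver.{0} V]
variable {W : V → Type} [∀ i, Quiver.{0} (W i)]
variable (Ri : ∀ (i : V) ⦃x y : W i⦄, (Quiver.Path x y →₀ k) → Prop)
variable (R : ∀ ⦃i j : V⦄, Quiver.Path i j → Quiver.Path i j → Prop)
variable (fobj : ∀ ⦃i j : V⦄, (i ⟶ j) → W i → W j)
variable (fhomQ : ∀ ⦃i j : V⦄ (a : i ⟶ j) ⦃x y : W i⦄,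
  XH Ri i x y →ₗ[k] XH Ri j (fobj a x) (fobj a y))

/-- The hom-sets `I(i,j)` of the presented category `I = ⟨Q ∣ R⟩`. -/
abbrev IHom (i j : V) : Type := presObj R i ⟶ presObj R j

/-- Action of a morphism of `I` on objects (via a representative path). -/
def XobjI {i j : V} (a : IHom R i j) (x : W i) : W j := pobj fobj (Quot.out a) x

/-- Hom-modules of the Grothendieck construction:
`Gr(X)((i,x),(j,y)) = ⨁_{a ∈ I(i,j)} X(j)(X(a)x, y)`. -/
abbrev GrH (i : V) (x : W i) (j : V) (y : W j) : Type :=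
  DirectSum (IHom R i j) (fun a => XH Ri j (XobjI R fobj a x) y)

/-- The identity of `Gr(X)` at `(i,x)`. -/
def grId (i : V) (x : W i)
    (hid : XobjI R fobj (𝟙 (presObj R i)) x = x) : GrH Ri R fobj i x i x :=
  DirectSum.of (fun a => XH Ri i (XobjI R fobj a x) x) (𝟙 (presObj R i))
    (castXH Ri hid.symm rfl
      (Submodule.Quotient.mk (Finsupp.single Quiver.Path.nil 1)))

/-- Composition in `Gr(X)`: `(g ∘ f)_c = ∑_{c = b∘a} g_b · X(b)(f_a)`. -/
def grcomp
    (hX : ∀ (i j l : V) (a : IHom R i j) (b : IHom R j l) (x : W i),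
      XobjI R fobj (a ≫ b) x = XobjI R fobj b (XobjI R fobj a x))
    {i : V} {x : W i} {j : V} {y : W j} {l : V} {z : W l}
    (f : GrH Ri R fobj i x j y) (g : GrH Ri R fobj j y l z) :
    GrH Ri R fobj i x l z :=
  DFinsupp.sum f fun a fa => DFinsupp.sum g fun b gb =>
    DirectSum.of (fun c => XH Ri l (XobjI R fobj c x) z) (a ≫ b)
      (castXH Ri (hX i j l a b x).symm rfl
        (qcomp Ri (phomQ Ri fobj fhomQ (Quot.out b) fa) gb))

end



noncomputable section AuxStmt16
variable {k : Type} [Field k] {V : Type} [Quiver.{0} V]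
variable {W : V → Type} [∀ i, Quiver.{0} (W i)]
variable (fobj : ∀ ⦃i j : V⦄, (i ⟶ j) → W i → W j)

lemma kpcomp_single_one_left' {u v w : Σ i : V, W i} (p : QPath fobj u v)
    (g : QPath fobj v w →₀ k) :
    kpcomp fobj (Finsupp.single p (1:k)) g = Finsupp.mapDomain (qpComp fobj p) g := by
  unfold kpcomp
  rw [Finsupp.sum_single_index]
  · simp [Finsupp.mapDomain]
  · simp

lemma kpcomp_single_one_right' {u v w : Σ i : V, W i}
    (f : QPath fobj u v →₀ k) (β : QPath fobj v w) :
    kpcomp fobj f (Finsupp.single β (1:k))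
      = Finsupp.mapDomain (fun p => qpComp fobj p β) f := by
  unfold kpcomp
  rw [Finsupp.mapDomain]
  refine Finsupp.sum_congr fun p _ => ?_
  rw [Finsupp.sum_single_index] <;> simp

lemma pcomp_single_one_left' {i : V} {x y z : W i} (p : Quiver.Path x y)
    (g : Quiver.Path y z →₀ k) :
    pcomp (k := k) (Finsupp.single p (1:k)) g
      = Finsupp.mapDomain (fun q => p.comp q) g := by
  unfold pcomp
  rw [Finsupp.sum_single_index]
  · simp [Finsupp.mapDomain]
  · simp

lemma pcomp_single_one_right' {i : V} {x y z : W i}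
    (f : Quiver.Path x y →₀ k) (β : Quiver.Path y z) :
    pcomp (k := k) f (Finsupp.single β (1:k))
      = Finsupp.mapDomain (fun p => p.comp β) f := by
  unfold pcomp
  rw [Finsupp.mapDomain]
  refine Finsupp.sum_congr fun p _ => ?_
  rw [Finsupp.sum_single_index] <;> simp

lemma qpComp_assoc' {u v w z : Σ i : V, W i} (p : QPath fobj u v)
    (q : QPath fobj v w) (r : QPath fobj w z) :
    qpComp fobj (qpComp fobj p q) r = qpComp fobj p (qpComp fobj q r) := by
  induction r with
  | nil => rfl
  | cons r a ih => exact congrArg (fun t => QPath.cons t a) ih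

lemma innerPath_comp' {i : V} {x y z : W i} (p : Quiver.Path x y)
    (q : Quiver.Path y z) :
    innerPath fobj (p.comp q)
      = qpComp fobj (innerPath fobj p) (innerPath fobj q) := by
  induction q with
  | nil => rfl
  | cons q e ih => exact congrArg (fun t => QPath.cons t (QArr.inner e)) ih

lemma kpcomp_sandwich' {u u' v' v : Σ i : V, W i} (α : QPath fobj u u')
    (g : QPath fobj u' v' →₀ k) (β : QPath fobj v' v) :
    kpcomp fobj (Finsupp.single α (1:k)) (kpcomp fobj g (Finsupp.single β 1))
      = Finsupp.mapDomain (fun p => qpComp fobj α (qpComp fobj p β)) g := by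
  rw [kpcomp_single_one_right', kpcomp_single_one_left', ← Finsupp.mapDomain_comp]
  rfl

lemma kpcomp_sigma' {u : Σ i : V, W i} {i : V} {x y : W i}
    (P : QPath fobj u ⟨i, x⟩) (l : Quiver.Path x y →₀ k) :
    kpcomp fobj (Finsupp.single P (1:k)) (sigmaMap fobj l)
      = Finsupp.mapDomain (fun q => qpComp fobj P (innerPath fobj q)) l := by
  rw [kpcomp_single_one_left', sigmaMap, ← Finsupp.mapDomain_comp]
  rfl

variable (Ri : ∀ (i : V) ⦃x y : W i⦄, (Quiver.Path x y →₀ k) → Prop)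
variable (R : ∀ ⦃i j : V⦄, Quiver.Path i j → Quiver.Path i j → Prop)
variable (lift : ∀ ⦃i j : V⦄ (a : i ⟶ j) ⦃x y : W i⦄ (α : x ⟶ y),
  Quiver.Path (fobj a x) (fobj a y) →₀ k)

lemma key_mem' {j : V} {x y : W j} {u v : Σ i : V, W i}
    (P : QPath fobj u ⟨j, x⟩) (S : QPath fobj ⟨j, y⟩ v)
    {d : Quiver.Path x y →₀ k} (hd : d ∈ RIdeal Ri j x y) :
    Finsupp.mapDomain (fun q => qpComp fobj P (qpComp fobj (innerPath fobj q) S)) d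
      ∈ IdR' Ri fobj R lift u v := by
  induction hd using Submodule.span_induction with
  | mem s hs =>
    obtain ⟨x', y', α, r, β, hr, rfl⟩ := hs
    refine Submodule.subset_span ⟨_, _, qpComp fobj P (innerPath fobj α),
      sigmaMap fobj r, qpComp fobj (innerPath fobj β) S, RelR'.r1 r hr, ?_⟩
    rw [pcomp_single_one_right', pcomp_single_one_left', ← Finsupp.mapDomain_comp,
        ← Finsupp.mapDomain_comp, kpcomp_single_one_right', kpcomp_single_one_left',
        sigmaMap, ← Finsupp.mapDomain_comp, ← Finsupp.mapDomain_comp]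
    refine Finsupp.mapDomain_congr fun q _ => ?_
    simp only [Function.comp, innerPath_comp', qpComp_assoc']
  | zero => simpa using Submodule.zero_mem _
  | add a b _ _ ha hb => rw [Finsupp.mapDomain_add]; exact Submodule.add_mem _ ha hb
  | smul c a _ ha => rw [Finsupp.mapDomain_smul]; exact Submodule.smul_mem _ _ ha

lemma IdR'_mono'
    (lift₁ lift₂ : ∀ ⦃i j : V⦄ (a : i ⟶ j) ⦃x y : W i⦄ (α : x ⟶ y),
      Quiver.Path (fobj a x) (fobj a y) →₀ k)
    (hd : ∀ ⦃i j : V⦄ (a : i ⟶ j) ⦃x y : W i⦄ (α : x ⟶ y),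
      lift₂ a α - lift₁ a α ∈ RIdeal Ri j (fobj a x) (fobj a y))
    (u v : Σ i : V, W i) :
    IdR' Ri fobj R lift₁ u v ≤ IdR' Ri fobj R lift₂ u v := by
  rw [IdR', Submodule.span_le]
  rintro f ⟨u', v', α, g, β, hg, rfl⟩
  cases hg with
  | r1 r hr =>
    exact Submodule.subset_span ⟨_, _, α, _, β, RelR'.r1 r hr, rfl⟩
  | r2 g h hgh x e =>
    exact Submodule.subset_span ⟨_, _, α, _, β, RelR'.r2 g h hgh x e, rfl⟩
  | @r3 i' j' a x' y' α' =>
    have hdm := hd a α'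
    have hsplit :
        (Finsupp.single (QPath.cons (QPath.cons (QPath.nil ⟨i', x'⟩) (QArr.inner α'))
            (QArr.trans a y')) (1:k)
          - kpcomp fobj
              (Finsupp.single (QPath.cons (QPath.nil ⟨i', x'⟩) (QArr.trans a x')) 1)
              (sigmaMap fobj (lift₁ a α')))
        = (Finsupp.single (QPath.cons (QPath.cons (QPath.nil ⟨i', x'⟩) (QArr.inner α'))
            (QArr.trans a y')) (1:k)
          - kpcomp fobj
              (Finsupp.single (QPath.cons (QPath.nil ⟨i', x'⟩) (QArr.trans a x')) 1)
              (sigmaMap fobj (lift₂ a α')))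
          + Finsupp.mapDomain
              (fun q => qpComp fobj (QPath.cons (QPath.nil ⟨i', x'⟩) (QArr.trans a x'))
                (innerPath fobj q)) (lift₂ a α' - lift₁ a α') := by
      simp only [kpcomp_sigma', ← Finsupp.lmapDomain_apply k k, map_sub]
      abel
    rw [kpcomp_sandwich', hsplit, Finsupp.mapDomain_add]
    refine Submodule.add_mem _ ?_ ?_
    · rw [← kpcomp_sandwich']
      exact Submodule.subset_span ⟨_, _, α, _, β, RelR'.r3 a α', rfl⟩
    · rw [← Finsupp.mapDomain_comp]
      have hfun : ((fun p => qpComp fobj α (qpComp fobj p β)) ∘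
            fun q => qpComp fobj (QPath.cons (QPath.nil ⟨i', x'⟩) (QArr.trans a x'))
              (innerPath fobj q))
          = fun q => qpComp fobj
              (qpComp fobj α (QPath.cons (QPath.nil ⟨i', x'⟩) (QArr.trans a x')))
              (qpComp fobj (innerPath fobj q) β) := by
        funext q
        simp only [Function.comp, qpComp_assoc']
      rw [hfun]
      exact key_mem' fobj Ri R lift₂ _ β hdm

end AuxStmt16

/-- The ideal `⟨R'⟩` of `kQ'` does not depend on the choice of the
lifts `aα` of `X(ā)(Φ⁽ⁱ⁾(α))` used in defining `R'₃`. -/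
theorem stmt16 {k : Type} [Field k] {V : Type} [Quiver.{0} V]
    {W : V → Type} [∀ i, Quiver.{0} (W i)]
    (Ri : ∀ (i : V) ⦃x y : W i⦄, (Quiver.Path x y →₀ k) → Prop)
    (R : ∀ ⦃i j : V⦄, Quiver.Path i j → Quiver.Path i j → Prop)
    (fobj : ∀ ⦃i j : V⦄, (i ⟶ j) → W i → W j)
    (fhomQ : ∀ ⦃i j : V⦄ (a : i ⟶ j) ⦃x y : W i⦄,
      XH Ri i x y →ₗ[k] XH Ri j (fobj a x) (fobj a y))
    (lift₁ lift₂ : ∀ ⦃i j : V⦄ (a : i ⟶ j) ⦃x y : W i⦄ (α : x ⟶ y),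
      Quiver.Path (fobj a x) (fobj a y) →₀ k)
    (hlift₁ : ∀ (i j : V) (a : i ⟶ j) (x y : W i) (α : x ⟶ y),
      (Submodule.Quotient.mk (lift₁ a α) : XH Ri j (fobj a x) (fobj a y))
        = fhomQ a (Submodule.Quotient.mk
            (Finsupp.single (Quiver.Path.nil.cons α) 1)))
    (hlift₂ : ∀ (i j : V) (a : i ⟶ j) (x y : W i) (α : x ⟶ y),
      (Submodule.Quotient.mk (lift₂ a α) : XH Ri j (fobj a x) (fobj a y))
        = fhomQ a (Submodule.Quotient.mk
            (Finsupp.single (Quiver.Path.nil.cons α) 1))) :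
    ∀ u v : Σ i : V, W i,
      IdR' Ri fobj R lift₁ u v = IdR' Ri fobj R lift₂ u v := by
  intro u v
  have h12 : ∀ ⦃i j : V⦄ (a : i ⟶ j) ⦃x y : W i⦄ (α : x ⟶ y),
      lift₂ a α - lift₁ a α ∈ RIdeal Ri j (fobj a x) (fobj a y) := by
    intro i j a x y α
    exact (Submodule.Quotient.eq _).mp
      ((hlift₂ i j a x y α).trans (hlift₁ i j a x y α).symm)
  have h21 : ∀ ⦃i j : V⦄ (a : i ⟶ j) ⦃x y : W i⦄ (α : x ⟶ y),
      lift₁ a α - lift₂ a α ∈ RIdeal Ri j (fobj a x) (fobj a y) := by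
    intro i j a x y α
    exact (Submodule.Quotient.eq _).mp
      ((hlift₁ i j a x y α).trans (hlift₂ i j a x y α).symm)
  exact le_antisymm (IdR'_mono' fobj Ri R lift₁ lift₂ h12 u v)
    (IdR'_mono' fobj Ri R lift₂ lift₁ h21 u v)
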